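/- Let G be a finite group, N a nilpotent normal subgroup of G, and H a subgroup of G such that H ∩ N is a π-Hall subgroup of N and HN/N is a π-group. Then HN is π-separable and H is a π-Hall subgroup of HN. -/

import Mathlib

/-- `H` is a `π`-Hall subgroup: `|H|` is a `π`-number and `|G : H|` is a `π'`-number. -/
def IsHall (π : Set ℕ) {G : Type*} [Group G] (H : Subgroup G) : Prop :=
  (∀ p : ℕ, p.Prime → p ∣ Nat.card H → p ∈ π) ∧
    ∀ p : ℕ, p.Prime → p ∣ H.index → p ∉ π
/-- `G` is `π`-separable: there is a subnormal series from `⊥` to `⊤` each of whose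
factors is a `π`-group or a `π'`-group (factor orders are expressed via `relindex`). -/
def IsPiSeparable (π : Set ℕ) (G : Type*) [Group G] : Prop :=
  ∃ (n : ℕ) (f : Fin (n + 1) → Subgroup G),
    f 0 = ⊥ ∧ f (Fin.last n) = ⊤ ∧
    ∀ i : Fin n, f i.castSucc ≤ f i.succ ∧
      ((f i.castSucc).subgroupOf (f i.succ)).Normal ∧
      ((∀ p : ℕ, p.Prime → p ∣ (f i.castSucc).relIndex (f i.succ) → p ∈ π) ∨
       (∀ p : ℕ, p.Prime → p ∣ (f i.castSucc).relIndex (f i.succ) → p ∉ π))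

/-- Two natural numbers are coprime if all prime divisors of the first lie in `π`
and none of the second do. -/
lemma pi_coprime {π : Set ℕ} {a b : ℕ}
    (ha : ∀ p : ℕ, p.Prime → p ∣ a → p ∈ π) (hb : ∀ p : ℕ, p.Prime → p ∣ b → p ∉ π) :
    Nat.Coprime a b := by
  by_contra h
  have hp : (Nat.gcd a b).minFac.Prime := Nat.minFac_prime h
  have hpa : (Nat.gcd a b).minFac ∣ a := (Nat.minFac_dvd _).trans (Nat.gcd_dvd_left a b)
  have hpb : (Nat.gcd a b).minFac ∣ b := (Nat.minFac_dvd _).trans (Nat.gcd_dvd_right a b)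
  exact hb _ hp hpb (ha _ hp hpa)

/-- A `π`-subgroup is contained in a normal subgroup of `π'` index. -/
lemma le_of_pi_subgroup {X : Type*} [Group X] [Finite X] {π : Set ℕ} {K L : Subgroup X}
    [K.Normal]
    (hKind : ∀ p : ℕ, p.Prime → p ∣ K.index → p ∉ π)
    (hL : ∀ p : ℕ, p.Prime → p ∣ Nat.card L → p ∈ π) : L ≤ K := by
  have hcop : Nat.Coprime (Nat.card L) K.index := pi_coprime hL hKind
  set f := QuotientGroup.mk' K
  have h1 : Nat.card (L.map f) ∣ Nat.card L := by
    have hs : Function.Surjective ((f.comp L.subtype).rangeRestrict) :=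
      MonoidHom.rangeRestrict_surjective _
    have := Subgroup.card_dvd_of_surjective _ hs
    rwa [MonoidHom.range_eq_map, ← Subgroup.map_map, ← MonoidHom.range_eq_map,
      Subgroup.range_subtype] at this
  have h2 : Nat.card (L.map f) ∣ K.index := by
    rw [Subgroup.index_eq_card]
    exact Subgroup.card_subgroup_dvd_card _
  have hone : Nat.card (L.map f) = 1 := Nat.eq_one_of_dvd_coprimes hcop h1 h2
  have hbot : L.map f = ⊥ := Subgroup.card_eq_one.mp hone
  rw [Subgroup.map_eq_bot_iff, QuotientGroup.ker_mk'] at hbot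
  exact hbot

/-- In a finite nilpotent group, any `π`-Hall subgroup is normal. -/
lemma hall_normal {X : Type*} [Group X] [Finite X] [Group.IsNilpotent X] {π : Set ℕ}
    {K : Subgroup X} (hK : IsHall π K) : K.Normal := by
  rw [← Subgroup.normalizer_eq_top_iff]
  have hnc := normalizerCondition_of_isNilpotent (G := X)
  rw [normalizerCondition_iff_only_full_group_self_normalizing] at hnc
  refine hnc _ (le_antisymm ?_ Subgroup.le_normalizer)
  intro g hg
  set M := Subgroup.normalizer (K : Set X) with hM
  set L := K.map (MulAut.conj g).toMonoidHom with hLdef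
  have hcard : Nat.card L = Nat.card K :=
    (Nat.card_congr (Subgroup.equivMapOfInjective K _ (MulAut.conj g).injective).toEquiv).symm
  have hLM : L ≤ M := by
    rintro x ⟨k, hk, rfl⟩
    exact (Subgroup.mem_normalizer_iff.mp hg _).mp (Subgroup.le_normalizer hk)
  -- work inside M
  have hsub : L.subgroupOf M ≤ K.subgroupOf M := by
    apply le_of_pi_subgroup (π := π)
    · intro p hp hd
      refine hK.2 p hp (dvd_trans hd ?_)
      exact Subgroup.relIndex_dvd_index_of_le Subgroup.le_normalizer
    · intro p hp hd
      refine hK.1 p hp ?_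
      rwa [Nat.card_congr (Subgroup.subgroupOfEquivOfLe hLM).toEquiv, hcard] at hd
  have hLK : L ≤ K := by
    intro x hx
    have hx' : (⟨x, hLM hx⟩ : ↥M) ∈ L.subgroupOf M := Subgroup.mem_subgroupOf.mpr hx
    exact Subgroup.mem_subgroupOf.mp (hsub hx')
  have hEq : L = K := Subgroup.eq_of_le_of_card_ge hLK (le_of_eq hcard.symm)
  rw [Subgroup.mem_normalizer_iff]
  intro h
  constructor
  · intro hh
    rw [← hEq]
    exact Subgroup.mem_map.mpr ⟨h, hh, by simp⟩
  · intro hh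
    rw [← hEq, Subgroup.mem_map] at hh
    obtain ⟨k, hk, hk2⟩ := hh
    simp only [MulEquiv.coe_toMonoidHom, MulAut.conj_apply] at hk2
    have hkh : k = h := mul_left_cancel (mul_right_cancel hk2)
    rwa [← hkh]

/-- If `N ⊴ G` is nilpotent, `H ∩ N` is `π`-Hall in `N` and `HN/N` is a `π`-group,
then `HN` is `π`-separable and `H` is a `π`-Hall subgroup of `HN`. -/
theorem stmt6 {G : Type*} [Group G] [Finite G] (π : Set ℕ) (N H : Subgroup G)
    [N.Normal] (hnil : Group.IsNilpotent N)
    (hHall : IsHall π ((H ⊓ N).subgroupOf N))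
    (hquot : ∀ p : ℕ, p.Prime → p ∣ N.relIndex (H ⊔ N) → p ∈ π) :
    IsPiSeparable π ↥(H ⊔ N) ∧ IsHall π (H.subgroupOf (H ⊔ N)) := by
  haveI : Group.IsNilpotent ↥N := hnil
  set S := H ⊔ N with hS
  have hNS : N ≤ S := le_sup_right
  have hHS : H ≤ S := le_sup_left
  have hIN : H ⊓ N ≤ N := inf_le_right
  have hIH : H ⊓ N ≤ H := inf_le_left
  have hIS : H ⊓ N ≤ S := hIH.trans hHS
  -- basic cardinalities
  have hcardN : Nat.card ((H ⊓ N).subgroupOf N) = Nat.card (H ⊓ N : Subgroup G) :=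
    Nat.card_congr (Subgroup.subgroupOfEquivOfLe hIN).toEquiv
  have hapi : ∀ p : ℕ, p.Prime → p ∣ Nat.card (H ⊓ N : Subgroup G) → p ∈ π := by
    intro p hp hd; exact hHall.1 p hp (by rwa [hcardN])
  have hb : ∀ p : ℕ, p.Prime → p ∣ (H ⊓ N).relIndex N → p ∉ π := hHall.2
  -- second isomorphism theorem
  have hsecond : (H ⊓ N).relIndex H = N.relIndex S := by
    rw [hS, Subgroup.relIndex_sup_right, inf_comm, Subgroup.inf_relIndex_right]
  -- |H| = |H ⊓ N| * [HN : N]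
  have hcardH : Nat.card H = Nat.card (H ⊓ N : Subgroup G) * N.relIndex S := by
    rw [← hsecond]
    have := Subgroup.card_mul_index ((H ⊓ N).subgroupOf H)
    rw [Nat.card_congr (Subgroup.subgroupOfEquivOfLe hIH).toEquiv] at this
    exact this.symm
  -- [HN : H] = [N : H ⊓ N]
  have hc0 : N.relIndex S ≠ 0 := Subgroup.index_ne_zero_of_finite
  have hrelHS : H.relIndex S = (H ⊓ N).relIndex N := by
    have e1 := Subgroup.relIndex_mul_relIndex (H ⊓ N) H S hIH hHS
    have e2 := Subgroup.relIndex_mul_relIndex (H ⊓ N) N S hIN hNS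
    rw [hsecond] at e1
    have key : N.relIndex S * H.relIndex S = N.relIndex S * (H ⊓ N).relIndex N := by
      rw [e1, ← e2, mul_comm]
    exact Nat.eq_of_mul_eq_mul_left (Nat.pos_of_ne_zero hc0) key
  -- normality of H ⊓ N in N
  have hKnormal : ((H ⊓ N).subgroupOf N).Normal := hall_normal hHall
  constructor
  · -- π-separability of HN via ⊥ ≤ (H∩N) ≤ N ≤ HN
    refine ⟨3, ![⊥, (H ⊓ N).subgroupOf S, N.subgroupOf S, ⊤], rfl, rfl, ?_⟩
    intro i
    fin_cases i
    · refine ⟨bot_le, inferInstanceAs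
        (((⊥ : Subgroup ↥S).subgroupOf ((H ⊓ N).subgroupOf S)).Normal), Or.inl ?_⟩
      intro p hp hd
      have hd' : p ∣ (⊥ : Subgroup ↥S).relIndex ((H ⊓ N).subgroupOf S) := hd
      rw [Subgroup.relIndex_bot_left,
        Nat.card_congr (Subgroup.subgroupOfEquivOfLe hIS).toEquiv] at hd'
      exact hapi p hp hd'
    · refine ⟨?_, ?_, Or.inr ?_⟩
      · show (H ⊓ N).subgroupOf S ≤ N.subgroupOf S
        intro x hx
        exact Subgroup.mem_subgroupOf.mpr (hIN (Subgroup.mem_subgroupOf.mp hx))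
      · show (((H ⊓ N).subgroupOf S).subgroupOf (N.subgroupOf S)).Normal
        constructor
        intro n hn g
        simp only [Subgroup.mem_subgroupOf] at hn ⊢
        have hnN : ((n : ↥S) : G) ∈ N := hIN hn
        have hgN : ((g : ↥S) : G) ∈ N := Subgroup.mem_subgroupOf.mp g.2
        have hc := hKnormal.conj_mem ⟨((n : ↥S) : G), hnN⟩
          (Subgroup.mem_subgroupOf.mpr hn) ⟨((g : ↥S) : G), hgN⟩
        rw [Subgroup.mem_subgroupOf] at hc
        simpa using hc
      · intro p hp hd
        have hd' : p ∣ ((H ⊓ N).subgroupOf S).relIndex (N.subgroupOf S) := hd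
        rw [Subgroup.relIndex_subgroupOf hNS] at hd'
        exact hb p hp hd'
    · refine ⟨le_top, inferInstanceAs
        (((N.subgroupOf S).subgroupOf (⊤ : Subgroup ↥S)).Normal), Or.inl ?_⟩
      intro p hp hd
      have hd' : p ∣ (N.subgroupOf S).relIndex (⊤ : Subgroup ↥S) := hd
      rw [Subgroup.relIndex_top_right] at hd'
      exact hquot p hp hd'
  · constructor
    · intro p hp hd
      rw [Nat.card_congr (Subgroup.subgroupOfEquivOfLe hHS).toEquiv, hcardH] at hd
      rcases (Nat.Prime.dvd_mul hp).mp hd with h | h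
      · exact hapi p hp h
      · exact hquot p hp h
    · intro p hp hd
      have hd' : p ∣ H.relIndex S := hd
      rw [hrelHS] at hd'
      exact hb p hp hd'
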